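/- arXiv:1007.2833 — 3 statements merged into one kernel-verified Lean document; each statement's English description precedes it below -/
import Mathlib

section
/- Let X be a nonnegative, extended-real-valued, increasing, right-continuous, progressively measurable process on a filtered probability space, and for M > 0 let σ_M = inf{ r ≥ 0 : X(r) ≥ M }. Suppose there exists an increasing sequence (τ_n) of stopping times with τ_n ↑ ∞ almost surely such that for every fixed n and every t > 0 one has κ_{n,t} := sup_{M>0} E[ X(τ_n ∧ σ_M ∧ t) ] < ∞. Then there is a set Ω̃ ⊆ Ω of full probability such that X(t, ω) < ∞ for all t ∈ [0, ∞) and all ω ∈ Ω̃. -/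
open MeasureTheory Filter Set
open scoped NNReal ENNReal Topology

/-- The hitting time `σ_M(ω) = inf { r ≥ 0 : X(r,ω) ≥ M }`, valued in `[0,∞]`
(with `inf ∅ = ∞`). -/
noncomputable def hitTime {Ω : Type*} (X : ℝ≥0 → Ω → ℝ≥0∞) (M : ℝ≥0) (ω : Ω) : ℝ≥0∞ :=
  sInf ((fun r : ℝ≥0 => (r : ℝ≥0∞)) '' {r : ℝ≥0 | (M : ℝ≥0∞) ≤ X r ω})

lemma hitTime_le {Ω : Type*} {X : ℝ≥0 → Ω → ℝ≥0∞} {M : ℝ≥0} {ω : Ω} {t : ℝ≥0}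
    (h : (M : ℝ≥0∞) ≤ X t ω) : hitTime X M ω ≤ (t : ℝ≥0∞) :=
  sInf_le ⟨t, h, rfl⟩

lemma le_X_hitTime {Ω : Type*} {X : ℝ≥0 → Ω → ℝ≥0∞}
    (hmono : ∀ ω, Monotone fun t => X t ω)
    (hrc : ∀ ω t, ContinuousWithinAt (fun s => X s ω) (Ici t) t)
    {M : ℝ≥0} {ω : Ω} (hfin : hitTime X M ω ≠ ⊤) :
    (M : ℝ≥0∞) ≤ X (hitTime X M ω).toNNReal ω := by
  set a : ℝ≥0 := (hitTime X M ω).toNNReal with ha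
  have hstep : ∀ s : ℝ≥0, a < s → (M : ℝ≥0∞) ≤ X s ω := by
    intro s hs
    have h1 : hitTime X M ω < (s : ℝ≥0∞) := by
      rw [← ENNReal.coe_toNNReal hfin]
      exact_mod_cast hs
    obtain ⟨x, hx, hxs⟩ := sInf_lt_iff.mp h1
    obtain ⟨r, hr, rfl⟩ := hx
    have hrs : r ≤ s := by simpa using hxs.le
    exact hr.trans (hmono ω hrs)
  have hne : (𝓝[>] a).NeBot := nhdsGT_neBot a
  have htend : Tendsto (fun s => X s ω) (𝓝[>] a) (𝓝 (X a ω)) :=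
    (hrc ω a).mono_left (nhdsWithin_mono _ Ioi_subset_Ici_self)
  refine ge_of_tendsto htend ?_
  exact eventually_mem_nhdsWithin.mono fun s hs => hstep s hs

theorem stmt0 {Ω : Type*} {m : MeasurableSpace Ω} (P : Measure Ω) [IsProbabilityMeasure P]
    (F : Filtration ℝ≥0 m) (X : ℝ≥0 → Ω → ℝ≥0∞)
    (hmono : ∀ ω, Monotone fun t => X t ω)
    (hrc : ∀ ω t, ContinuousWithinAt (fun s => X s ω) (Ici t) t)
    (hprog : ProgMeasurable F X)
    (τ : ℕ → Ω → ℝ≥0)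
    (hτ : ∀ n, IsStoppingTime F (fun ω => (τ n ω : WithTop ℝ≥0)))
    (hτmono : ∀ ω, Monotone fun n => τ n ω)
    (hτlim : ∀ᵐ ω ∂P, Tendsto (fun n => τ n ω) atTop atTop)
    (hκ : ∀ (n : ℕ) (t : ℝ≥0), 0 < t →
      (⨆ (M : ℝ≥0) (_ : 0 < M),
        ∫⁻ ω, X ((hitTime X M ω ⊓ (τ n ω : ℝ≥0∞) ⊓ (t : ℝ≥0∞)).toNNReal) ω ∂P) < ⊤) :
    ∀ᵐ ω ∂P, ∀ t : ℝ≥0, X t ω < ⊤ := by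
  -- the bad sets
  set S : ℕ → ℕ → Set Ω := fun n k =>
    {ω | X ((k : ℝ≥0) + 1) ω = ⊤ ∧ ((k : ℝ≥0) + 1) ≤ τ n ω} with hS
  have hSmeas : ∀ n k, MeasurableSet (S n k) := by
    intro n k
    have h1 : Measurable (X ((k : ℝ≥0) + 1)) :=
      ((IsStronglyProgressive.stronglyAdapted hprog ((k : ℝ≥0) + 1)).measurable).mono (F.le _) le_rfl
    have h2 : MeasurableSet {ω | ((k : ℝ≥0) + 1) ≤ τ n ω} := by
      have := F.le _ _ ((hτ n).measurableSet_ge ((k : ℝ≥0) + 1))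
      simp only [WithTop.coe_le_coe] at this
      exact this
    exact (h1 (measurableSet_singleton ⊤)).inter h2
  have hSnull : ∀ n k, P (S n k) = 0 := by
    intro n k
    set t : ℝ≥0 := (k : ℝ≥0) + 1 with hts
    have ht : (0 : ℝ≥0) < t := by positivity
    have hκ' := hκ n t ht
    -- the value on S n k is at least M
    have hbound : ∀ M : ℝ≥0, 0 < M →
        (M : ℝ≥0∞) * P (S n k) ≤
          ∫⁻ ω, X ((hitTime X M ω ⊓ (τ n ω : ℝ≥0∞) ⊓ (t : ℝ≥0∞)).toNNReal) ω ∂P := by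
      intro M hM
      have hpt : ∀ ω ∈ S n k,
          (M : ℝ≥0∞) ≤ X ((hitTime X M ω ⊓ (τ n ω : ℝ≥0∞) ⊓ (t : ℝ≥0∞)).toNNReal) ω := by
        intro ω hω
        obtain ⟨hXtop, hτge⟩ := hω
        have hle_t : hitTime X M ω ≤ (t : ℝ≥0∞) := hitTime_le (by rw [hXtop]; exact le_top)
        have hle_τ : hitTime X M ω ≤ (τ n ω : ℝ≥0∞) :=
          hle_t.trans (ENNReal.coe_le_coe.mpr (hts.le.trans hτge))
        have hmin : hitTime X M ω ⊓ (τ n ω : ℝ≥0∞) ⊓ (t : ℝ≥0∞) = hitTime X M ω := by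
          rw [inf_eq_left.mpr hle_τ, inf_eq_left.mpr hle_t]
        rw [hmin]
        exact le_X_hitTime hmono hrc (hle_t.trans_lt (by exact ENNReal.coe_lt_top)).ne
      calc (M : ℝ≥0∞) * P (S n k)
          = ∫⁻ ω, (S n k).indicator (fun _ => (M : ℝ≥0∞)) ω ∂P := by
            rw [lintegral_indicator (hSmeas n k), setLIntegral_const]
        _ ≤ _ := by
            refine lintegral_mono fun ω => ?_
            by_cases hω : ω ∈ S n k
            · simpa [indicator_of_mem hω] using hpt ω hω
            · simp [indicator_of_notMem hω]
    -- pass to the sup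
    have hsup : ∀ M : ℝ≥0, 0 < M → (M : ℝ≥0∞) * P (S n k) ≤
        (⨆ (M : ℝ≥0) (_ : 0 < M),
          ∫⁻ ω, X ((hitTime X M ω ⊓ (τ n ω : ℝ≥0∞) ⊓ (t : ℝ≥0∞)).toNNReal) ω ∂P) := by
      intro M hM
      exact (hbound M hM).trans (le_iSup₂ (f := fun M (_ : 0 < M) =>
        ∫⁻ ω, X ((hitTime X M ω ⊓ (τ n ω : ℝ≥0∞) ⊓ (t : ℝ≥0∞)).toNNReal) ω ∂P) M hM)
    by_contra hne
    have hPS : 0 < P (S n k) := pos_iff_ne_zero.mpr hne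
    have : ∀ j : ℕ, (j : ℝ≥0∞) * P (S n k) ≤
        (⨆ (M : ℝ≥0) (_ : 0 < M),
          ∫⁻ ω, X ((hitTime X M ω ⊓ (τ n ω : ℝ≥0∞) ⊓ (t : ℝ≥0∞)).toNNReal) ω ∂P) := by
      intro j
      rcases Nat.eq_zero_or_pos j with hj | hj
      · simp [hj]
      · have := hsup (j : ℝ≥0) (by exact_mod_cast hj)
        simpa using this
    have htop : (⨆ (M : ℝ≥0) (_ : 0 < M),
        ∫⁻ ω, X ((hitTime X M ω ⊓ (τ n ω : ℝ≥0∞) ⊓ (t : ℝ≥0∞)).toNNReal) ω ∂P) = ⊤ := by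
      refine top_unique ?_
      have htt : Tendsto (fun j : ℕ => (j : ℝ≥0∞) * P (S n k)) atTop (𝓝 (⊤ * P (S n k))) :=
        ENNReal.Tendsto.mul_const ENNReal.tendsto_nat_nhds_top (Or.inl (by simp))
      rw [ENNReal.top_mul hne] at htt
      exact le_of_tendsto' htt this
    exact absurd (htop ▸ hκ') (lt_irrefl ⊤)
  -- combine
  have hae : ∀ᵐ ω ∂P, (Tendsto (fun n => τ n ω) atTop atTop) ∧ ∀ n k, ω ∉ S n k := by
    refine hτlim.and ?_
    rw [ae_iff]
    have : {ω | ¬ ∀ n k, ω ∉ S n k} ⊆ ⋃ n, ⋃ k, S n k := by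
      intro ω hω
      simp only [mem_setOf_eq, not_forall, not_not] at hω
      obtain ⟨n, k, hnk⟩ := hω
      exact mem_iUnion.mpr ⟨n, mem_iUnion.mpr ⟨k, hnk⟩⟩
    refine measure_mono_null this ?_
    exact (measure_iUnion_null fun n => measure_iUnion_null fun k => hSnull n k)
  filter_upwards [hae] with ω hω t
  obtain ⟨htend, hnot⟩ := hω
  obtain ⟨k, hk⟩ := exists_nat_ge t
  have hk' : t ≤ (k : ℝ≥0) + 1 := hk.trans (le_add_of_nonneg_right zero_le_one)
  obtain ⟨n, hn⟩ := (htend.eventually_ge_atTop ((k : ℝ≥0) + 1)).exists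
  have hXk : X ((k : ℝ≥0) + 1) ω ≠ ⊤ := by
    intro h
    exact hnot n k ⟨h, hn⟩
  exact (hmono ω hk').trans_lt (lt_top_iff_ne_top.mpr hXk)
end

section
/- Let L, h > 0 and let u : [0,L] × [−h,0] → ℝ be of class C¹ with u(0,z) = u(L,z) = 0 for all z ∈ [−h,0] and ∫_{−h}^0 u(x,z) dz = 0 for all x ∈ [0,L]; set w(u)(x,z) := ∫_z^0 ∂_x u(x,s) ds. Then for every φ : [0,L] × [−h,0] → ℝ of class C¹, the cancellation identity holds: ∫_M ( u ∂_x φ + w(u) ∂_z φ ) φ dM = 0. -/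
open MeasureTheory Set intervalIntegral

/-- Partial derivative in the first (horizontal, `x`) variable. -/
noncomputable def pdx (f : ℝ × ℝ → ℝ) (p : ℝ × ℝ) : ℝ := fderiv ℝ f p (1, 0)

/-- Partial derivative in the second (vertical, `z`) variable. -/
noncomputable def pdz (f : ℝ × ℝ → ℝ) (p : ℝ × ℝ) : ℝ := fderiv ℝ f p (0, 1)

/-- The diagnostic vertical velocity `w(u)(x,z) = ∫_z^0 ∂ₓ u(x,s) ds`. -/
noncomputable def wOp (u : ℝ × ℝ → ℝ) (p : ℝ × ℝ) : ℝ := ∫ s in p.2..0, pdx u (p.1, s)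

/-- The open domain `M = (0,L) × (-h,0)`. -/
def dom (L h : ℝ) : Set (ℝ × ℝ) := Ioo 0 L ×ˢ Ioo (-h) 0

/-- The closed domain `M̄ = [0,L] × [-h,0]`. -/
def cdom (L h : ℝ) : Set (ℝ × ℝ) := Icc 0 L ×ˢ Icc (-h) 0

/-- The `L²(M)` norm. -/
noncomputable def l2 (L h : ℝ) (f : ℝ × ℝ → ℝ) : ℝ :=
  Real.sqrt (∫ p in dom L h, f p ^ 2)

/-- The `H¹(M)` norm. -/
noncomputable def h1n (L h : ℝ) (f : ℝ × ℝ → ℝ) : ℝ :=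
  Real.sqrt (l2 L h f ^ 2 + l2 L h (pdx f) ^ 2 + l2 L h (pdz f) ^ 2)

/-- The `H²(M)` norm. -/
noncomputable def h2n (L h : ℝ) (f : ℝ × ℝ → ℝ) : ℝ :=
  Real.sqrt (h1n L h f ^ 2 + l2 L h (pdx (pdx f)) ^ 2 + l2 L h (pdx (pdz f)) ^ 2
    + l2 L h (pdz (pdz f)) ^ 2)

/-! Auxiliary lemmas -/

lemma cont_pdx {f : ℝ × ℝ → ℝ} (hf : ContDiff ℝ 1 f) : Continuous (pdx f) :=
  (hf.continuous_fderiv one_ne_zero).clm_apply continuous_const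

lemma cont_pdz {f : ℝ × ℝ → ℝ} (hf : ContDiff ℝ 1 f) : Continuous (pdz f) :=
  (hf.continuous_fderiv one_ne_zero).clm_apply continuous_const

lemma hderiv_x {f : ℝ × ℝ → ℝ} (hf : ContDiff ℝ 1 f) (x z : ℝ) :
    HasDerivAt (fun t => f (t, z)) (pdx f (x, z)) x := by
  have h1 : HasDerivAt (fun t : ℝ => (t, z)) ((1 : ℝ), (0 : ℝ)) x :=
    (hasDerivAt_id x).prodMk (hasDerivAt_const x z)
  exact ((hf.differentiable one_ne_zero (x, z)).hasFDerivAt).comp_hasDerivAt x h1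

lemma hderiv_z {f : ℝ × ℝ → ℝ} (hf : ContDiff ℝ 1 f) (x z : ℝ) :
    HasDerivAt (fun t => f (x, t)) (pdz f (x, z)) z := by
  have h1 : HasDerivAt (fun t : ℝ => (x, t)) ((0 : ℝ), (1 : ℝ)) z :=
    (hasDerivAt_const z x).prodMk (hasDerivAt_id z)
  exact ((hf.differentiable one_ne_zero (x, z)).hasFDerivAt).comp_hasDerivAt z h1

lemma cont_wOp {f : ℝ × ℝ → ℝ} (hf : ContDiff ℝ 1 f) : Continuous (wOp f) := by
  have h : Continuous fun p : ℝ × ℝ => ∫ t in (0:ℝ)..p.2, pdx f (p.1, t) :=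
    intervalIntegral.continuous_parametric_primitive_of_continuous
      (f := fun x t => pdx f (x, t))
      ((cont_pdx hf).comp (continuous_fst.prodMk continuous_snd))
  have he : wOp f = fun p : ℝ × ℝ => -∫ t in (0:ℝ)..p.2, pdx f (p.1, t) := by
    funext p
    exact intervalIntegral.integral_symm 0 p.2
  rw [he]
  exact h.neg

/-- differentiation under the integral sign -/
lemma hasDerivAt_H {u : ℝ × ℝ → ℝ} (hu : ContDiff ℝ 1 u) {h : ℝ} (hh : 0 < h) (x₀ : ℝ) :
    HasDerivAt (fun x => ∫ s in (-h)..(0:ℝ), u (x, s))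
      (∫ s in (-h)..(0:ℝ), pdx u (x₀, s)) x₀ := by
  have hmh : (-h : ℝ) ≤ 0 := by linarith
  obtain ⟨C, hC⟩ :=
    ((isCompact_Icc (a := x₀ - 1) (b := x₀ + 1)).prod
      (isCompact_Icc (a := -h) (b := (0:ℝ)))).exists_bound_of_continuousOn
      (cont_pdx hu).continuousOn
  have key := intervalIntegral.hasDerivAt_integral_of_dominated_loc_of_deriv_le
    (F := fun x t => u (x, t)) (F' := fun x t => pdx u (x, t)) (x₀ := x₀)
    (a := -h) (b := 0) (μ := volume) (bound := fun _ => C) (s := Metric.ball x₀ 1) (Metric.ball_mem_nhds x₀ one_pos)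
    (Filter.Eventually.of_forall fun x =>
      (hu.continuous.comp (continuous_const.prodMk continuous_id)).aestronglyMeasurable)
    ((hu.continuous.comp (continuous_const.prodMk continuous_id)).intervalIntegrable _ _)
    ((cont_pdx hu).comp (continuous_const.prodMk continuous_id)).aestronglyMeasurable
    (Filter.Eventually.of_forall fun t ht x hx => by
      have ht' : t ∈ Icc (-h) (0:ℝ) := by
        rw [Set.uIoc_of_le hmh] at ht
        exact Ioc_subset_Icc_self ht
      have hx' : x ∈ Icc (x₀ - 1) (x₀ + 1) := by
        rw [Metric.mem_ball, Real.dist_eq] at hx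
        have := abs_lt.mp hx
        constructor <;> linarith [this.1, this.2]
      exact hC (x, t) (Set.mk_mem_prod hx' ht'))
    (intervalIntegrable_const)
    (Filter.Eventually.of_forall fun t _ x _ => hderiv_x hu x t)
  exact key.2

theorem stmt8 (L h : ℝ) (hL : 0 < L) (hh : 0 < h)
    (u φ : ℝ × ℝ → ℝ) (hu : ContDiff ℝ 1 u) (hφ : ContDiff ℝ 1 φ)
    (hlat : ∀ z ∈ Icc (-h) (0:ℝ), u (0, z) = 0 ∧ u (L, z) = 0)
    (hmean : ∀ x ∈ Icc (0:ℝ) L, (∫ z in (-h)..(0:ℝ), u (x, z)) = 0) :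
    (∫ p in dom L h, (u p * pdx φ p + wOp u p * pdz φ p) * φ p) = 0 := by
  have hmh : (-h : ℝ) ≤ 0 := by linarith
  -- continuity facts
  have hφc : Continuous φ := hφ.continuous
  have hA : Continuous fun p : ℝ × ℝ => u p * (φ p * pdx φ p) :=
    hu.continuous.mul (hφc.mul (cont_pdx hφ))
  have hB : Continuous fun p : ℝ × ℝ => wOp u p * (φ p * pdz φ p) :=
    (cont_wOp hu).mul (hφc.mul (cont_pdz hφ))
  have hP : Continuous fun p : ℝ × ℝ => pdx u p * (φ p * φ p / 2) :=
    (cont_pdx hu).mul ((hφc.mul hφc).div_const 2)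
  -- integrability on the domain
  have hIOn : ∀ {G : ℝ × ℝ → ℝ}, Continuous G → IntegrableOn G (dom L h) := by
    intro G hG
    have h1 : IntegrableOn G (Icc (0:ℝ) L ×ˢ Icc (-h) (0:ℝ)) :=
      hG.continuousOn.integrableOn_compact (isCompact_Icc.prod isCompact_Icc)
    exact h1.mono_set (prod_mono Ioo_subset_Icc_self Ioo_subset_Icc_self)
  -- Fubini with `x` outer
  have fub1 : ∀ G : ℝ × ℝ → ℝ, Continuous G →
      (∫ p in dom L h, G p) = ∫ x in Ioo (0:ℝ) L, ∫ z in Ioo (-h) (0:ℝ), G (x, z) := by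
    intro G hG
    have hint : IntegrableOn G ((Ioo (0:ℝ) L) ×ˢ (Ioo (-h) (0:ℝ))) (volume.prod volume) := by
      rw [← Measure.volume_eq_prod]; exact hIOn hG
    calc ∫ p in dom L h, G p
        = ∫ p in (Ioo (0:ℝ) L) ×ˢ (Ioo (-h) (0:ℝ)), G p ∂(volume.prod volume) := by
          rw [← Measure.volume_eq_prod]; rfl
      _ = ∫ x in Ioo (0:ℝ) L, ∫ z in Ioo (-h) (0:ℝ), G (x, z) := setIntegral_prod G hint
  -- Fubini with `z` outer
  have fub2 : ∀ G : ℝ × ℝ → ℝ, Continuous G →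
      (∫ p in dom L h, G p) = ∫ z in Ioo (-h) (0:ℝ), ∫ x in (0:ℝ)..L, G (x, z) := by
    intro G hG
    have hint : Integrable (Function.uncurry fun x z => G (x, z))
        ((volume.restrict (Ioo (0:ℝ) L)).prod (volume.restrict (Ioo (-h) (0:ℝ)))) := by
      rw [Measure.prod_restrict, ← Measure.volume_eq_prod]; exact hIOn hG
    have hswap := MeasureTheory.integral_integral_swap hint
    calc ∫ p in dom L h, G p
        = ∫ x in Ioo (0:ℝ) L, ∫ z in Ioo (-h) (0:ℝ), G (x, z) := fub1 G hG
      _ = ∫ z in Ioo (-h) (0:ℝ), ∫ x in Ioo (0:ℝ) L, G (x, z) := hswap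
      _ = ∫ z in Ioo (-h) (0:ℝ), ∫ x in (0:ℝ)..L, G (x, z) := by
          simp_rw [intervalIntegral.integral_of_le hL.le, integral_Ioc_eq_integral_Ioo]
  -- vanishing of `w` at the bottom
  have hw_bot : ∀ x ∈ Ioo (0:ℝ) L, (∫ s in (-h)..(0:ℝ), pdx u (x, s)) = 0 := by
    intro x hx
    have h1 := hasDerivAt_H hu hh x
    have hev : (fun x => ∫ s in (-h)..(0:ℝ), u (x, s)) =ᶠ[nhds x] fun _ => (0:ℝ) := by
      filter_upwards [Ioo_mem_nhds hx.1 hx.2] with y hy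
      exact hmean y (Ioo_subset_Icc_self hy)
    have h2 : HasDerivAt (fun x => ∫ s in (-h)..(0:ℝ), u (x, s)) 0 x :=
      (hasDerivAt_const x (0:ℝ)).congr_of_eventuallyEq hev
    exact h1.unique h2
  -- Term B : integrate by parts in z, for x ∈ (0, L)
  have hB_eq : (∫ p in dom L h, wOp u p * (φ p * pdz φ p)) =
      ∫ x in Ioo (0:ℝ) L, ∫ z in (-h)..(0:ℝ), pdx u (x, z) * (φ (x, z) * φ (x, z) / 2) := by
    rw [fub1 _ hB]
    have step : ∀ x ∈ Ioo (0:ℝ) L,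
        (∫ z in Ioo (-h) (0:ℝ), wOp u (x, z) * (φ (x, z) * pdz φ (x, z))) =
        ∫ z in (-h)..(0:ℝ), pdx u (x, z) * (φ (x, z) * φ (x, z) / 2) := by
      intro x hx
      have hgx : Continuous fun s : ℝ => pdx u (x, s) :=
        (cont_pdx hu).comp (continuous_const.prodMk continuous_id)
      have hW : ∀ z ∈ uIcc (-h) (0:ℝ), HasDerivAt (fun t => wOp u (x, t)) (-(pdx u (x, z))) z := by
        intro z _
        have h1 : HasDerivAt (fun t => ∫ s in (0:ℝ)..t, pdx u (x, s)) (pdx u (x, z)) z :=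
          intervalIntegral.integral_hasDerivAt_right (hgx.intervalIntegrable 0 z)
            (hgx.stronglyMeasurableAtFilter _ _) hgx.continuousAt
        refine h1.neg.congr_of_eventuallyEq (Filter.Eventually.of_forall fun t => ?_)
        exact intervalIntegral.integral_symm 0 t
      have hV : ∀ z ∈ uIcc (-h) (0:ℝ),
          HasDerivAt (fun t => φ (x, t) * φ (x, t) / 2) (φ (x, z) * pdz φ (x, z)) z := by
        intro z _
        have h1 := hderiv_z hφ x z
        have h2 := (h1.mul h1).div_const 2
        convert h2 using 1
        all_goals first | rfl | ring
      have hint1 : IntervalIntegrable (fun z => -(pdx u (x, z))) volume (-h) 0 :=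
        (hgx.neg.intervalIntegrable _ _)
      have hint2 : IntervalIntegrable (fun z => φ (x, z) * pdz φ (x, z)) volume (-h) 0 :=
        (((hφc.comp (continuous_const.prodMk continuous_id)).mul
          ((cont_pdz hφ).comp (continuous_const.prodMk continuous_id))).intervalIntegrable _ _)
      have ibp := intervalIntegral.integral_mul_deriv_eq_deriv_mul hW hV hint1 hint2
      have hW0 : wOp u (x, 0) = 0 := intervalIntegral.integral_same
      have hWh : wOp u (x, -h) = 0 := hw_bot x hx
      rw [intervalIntegral.integral_of_le hmh, integral_Ioc_eq_integral_Ioo] at ibp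
      rw [ibp, hW0, hWh]
      simp only [zero_mul, sub_zero, zero_sub, neg_neg]
      rw [← intervalIntegral.integral_neg]
      congr 1
      funext z
      ring
    rw [setIntegral_congr_fun measurableSet_Ioo step]
  -- Term A : integrate by parts in x, for z ∈ (-h, 0)
  have hA_eq : (∫ p in dom L h, u p * (φ p * pdx φ p)) =
      - ∫ z in Ioo (-h) (0:ℝ), ∫ x in (0:ℝ)..L, pdx u (x, z) * (φ (x, z) * φ (x, z) / 2) := by
    rw [fub2 _ hA, ← MeasureTheory.integral_neg]
    have step : ∀ z ∈ Ioo (-h) (0:ℝ),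
        (∫ x in (0:ℝ)..L, u (x, z) * (φ (x, z) * pdx φ (x, z))) =
        -∫ x in (0:ℝ)..L, pdx u (x, z) * (φ (x, z) * φ (x, z) / 2) := by
      intro z hz
      have hU : ∀ x ∈ uIcc (0:ℝ) L, HasDerivAt (fun t => u (t, z)) (pdx u (x, z)) x :=
        fun x _ => hderiv_x hu x z
      have hV : ∀ x ∈ uIcc (0:ℝ) L,
          HasDerivAt (fun t => φ (t, z) * φ (t, z) / 2) (φ (x, z) * pdx φ (x, z)) x := by
        intro x _
        have h1 := hderiv_x hφ x z
        have h2 := (h1.mul h1).div_const 2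
        convert h2 using 1
        all_goals first | rfl | ring
      have hint1 : IntervalIntegrable (fun x => pdx u (x, z)) volume 0 L :=
        (((cont_pdx hu).comp (continuous_id.prodMk continuous_const)).intervalIntegrable _ _)
      have hint2 : IntervalIntegrable (fun x => φ (x, z) * pdx φ (x, z)) volume 0 L :=
        (((hφc.comp (continuous_id.prodMk continuous_const)).mul
          ((cont_pdx hφ).comp (continuous_id.prodMk continuous_const))).intervalIntegrable _ _)
      have ibp := intervalIntegral.integral_mul_deriv_eq_deriv_mul hU hV hint1 hint2
      rw [ibp, (hlat z (Ioo_subset_Icc_self hz)).1, (hlat z (Ioo_subset_Icc_self hz)).2]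
      ring
    exact setIntegral_congr_fun measurableSet_Ioo step
  -- swap of iterated integrals for the common integrand
  have swapP : (∫ x in (0:ℝ)..L, ∫ z in (-h)..(0:ℝ), pdx u (x, z) * (φ (x, z) * φ (x, z) / 2))
      = ∫ z in (-h)..(0:ℝ), ∫ x in (0:ℝ)..L, pdx u (x, z) * (φ (x, z) * φ (x, z) / 2) := by
    have hint : Integrable
        (Function.uncurry fun x z => pdx u (x, z) * (φ (x, z) * φ (x, z) / 2))
        ((volume.restrict (Ioc (0:ℝ) L)).prod (volume.restrict (Ioc (-h) (0:ℝ)))) := by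
      rw [Measure.prod_restrict, ← Measure.volume_eq_prod]
      have h1 : IntegrableOn (fun p : ℝ × ℝ => pdx u p * (φ p * φ p / 2))
          (Icc (0:ℝ) L ×ˢ Icc (-h) (0:ℝ)) :=
        hP.continuousOn.integrableOn_compact (isCompact_Icc.prod isCompact_Icc)
      exact h1.mono_set (prod_mono Ioc_subset_Icc_self Ioc_subset_Icc_self)
    have hs := MeasureTheory.integral_integral_swap hint
    simp_rw [intervalIntegral.integral_of_le hL.le, intervalIntegral.integral_of_le hmh]
    exact hs
  -- conversion Ioo → interval integral for the outer integrals
  have hIooL : ∀ f : ℝ → ℝ, (∫ x in Ioo (0:ℝ) L, f x) = ∫ x in (0:ℝ)..L, f x := fun f => by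
    rw [intervalIntegral.integral_of_le hL.le, integral_Ioc_eq_integral_Ioo]
  have hIooh : ∀ f : ℝ → ℝ, (∫ z in Ioo (-h) (0:ℝ), f z) = ∫ z in (-h)..(0:ℝ), f z := fun f => by
    rw [intervalIntegral.integral_of_le hmh, integral_Ioc_eq_integral_Ioo]
  -- putting things together
  have split : (∫ p in dom L h, (u p * pdx φ p + wOp u p * pdz φ p) * φ p) =
      (∫ p in dom L h, u p * (φ p * pdx φ p)) + ∫ p in dom L h, wOp u p * (φ p * pdz φ p) := by
    rw [← MeasureTheory.integral_add (hIOn hA) (hIOn hB)]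
    congr 1
    funext p
    ring
  rw [split, hA_eq, hB_eq, hIooL, hIooh, swapP]
  ring
end

section
/- There exists a constant c > 0, depending only on L and h, such that for all u of class C¹ on M̄ vanishing on Γ_l ∪ Γ_b with ∫_{−h}^0 u(x,z) dz = 0 for all x, all φ of class C² on M̄ vanishing on Γ_l ∪ Γ_b, and all continuous ψ on M̄, one has | ∫_M ( u ∂_x φ + w(u) ∂_z φ ) ψ dM | ≤ c ‖u‖_{H¹} ‖φ‖_{H¹}^{1/2} |φ|_{H²}^{1/2} |ψ|. -/
open MeasureTheory Set intervalIntegral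

/-! ### Auxiliary lemmas -/

lemma contDiff_pdx {n m : WithTop ℕ∞} {f : ℝ × ℝ → ℝ} (hf : ContDiff ℝ n f) (hmn : m + 1 ≤ n) :
    ContDiff ℝ m (pdx f) :=
  (ContinuousLinearMap.apply ℝ ℝ ((1:ℝ), (0:ℝ))).contDiff.comp (hf.fderiv_right hmn)

lemma contDiff_pdz {n m : WithTop ℕ∞} {f : ℝ × ℝ → ℝ} (hf : ContDiff ℝ n f) (hmn : m + 1 ≤ n) :
    ContDiff ℝ m (pdz f) :=
  (ContinuousLinearMap.apply ℝ ℝ ((0:ℝ), (1:ℝ))).contDiff.comp (hf.fderiv_right hmn)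

lemma hasDerivAt_slice_x {f : ℝ × ℝ → ℝ} (hf : Differentiable ℝ f) (z t : ℝ) :
    HasDerivAt (fun t => f (t, z)) (pdx f (t, z)) t := by
  have h1 : HasDerivAt (fun t : ℝ => (t, z)) ((1:ℝ), (0:ℝ)) t :=
    (hasDerivAt_id t).prodMk (hasDerivAt_const t z)
  exact (hf (t, z)).hasFDerivAt.comp_hasDerivAt t h1

lemma hasDerivAt_slice_z {f : ℝ × ℝ → ℝ} (hf : Differentiable ℝ f) (x s : ℝ) :
    HasDerivAt (fun s => f (x, s)) (pdz f (x, s)) s := by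
  have h1 : HasDerivAt (fun s : ℝ => (x, s)) ((0:ℝ), (1:ℝ)) s :=
    (hasDerivAt_const s x).prodMk (hasDerivAt_id s)
  exact (hf (x, s)).hasFDerivAt.comp_hasDerivAt s h1

lemma cs_abs {α : Type*} [MeasurableSpace α] {μ : Measure α} {f g : α → ℝ}
    (hf : MemLp f 2 μ) (hg : MemLp g 2 μ) :
    ∫ x, |f x| * |g x| ∂μ ≤ Real.sqrt (∫ x, f x ^ 2 ∂μ) * Real.sqrt (∫ x, g x ^ 2 ∂μ) := by
  have h22 : (2:ℝ).HolderConjugate 2 := Real.HolderConjugate.two_two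
  have hf2 : MemLp (fun x => |f x|) (ENNReal.ofReal 2) μ := by
    simpa [Real.norm_eq_abs, ENNReal.ofReal_ofNat] using hf.norm
  have hg2 : MemLp (fun x => |g x|) (ENNReal.ofReal 2) μ := by
    simpa [Real.norm_eq_abs, ENNReal.ofReal_ofNat] using hg.norm
  have H := integral_mul_le_Lp_mul_Lq_of_nonneg h22
      (Filter.Eventually.of_forall fun x => abs_nonneg (f x))
      (Filter.Eventually.of_forall fun x => abs_nonneg (g x)) hf2 hg2
  have e : ∀ y : ℝ, |y| ^ (2:ℝ) = y ^ 2 := fun y => by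
    rw [show (2:ℝ) = ((2:ℕ):ℝ) by norm_num, Real.rpow_natCast, sq_abs]
  simp_rw [e] at H
  rw [Real.sqrt_eq_rpow, Real.sqrt_eq_rpow]
  exact H

lemma integrableOn_prodIoo {f : ℝ × ℝ → ℝ} (hf : Continuous f) {a b c d : ℝ} :
    IntegrableOn f (Ioo a b ×ˢ Ioo c d) := by
  have := (hf.continuousOn.integrableOn_compact (μ := volume)
      (isCompact_Icc.prod isCompact_Icc : IsCompact (Icc a b ×ˢ Icc c d)))
  exact this.mono_set (prod_mono Ioo_subset_Icc_self Ioo_subset_Icc_self)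

lemma integrableOn_dom {L h : ℝ} {f : ℝ × ℝ → ℝ} (hf : Continuous f) :
    IntegrableOn f (dom L h) := integrableOn_prodIoo hf

lemma memL2_dom {L h : ℝ} {f : ℝ × ℝ → ℝ} (hf : Continuous f) :
    MemLp f 2 (volume.restrict (dom L h)) :=
  (memLp_two_iff_integrable_sq (hf.aestronglyMeasurable.restrict)).2 (integrableOn_dom (hf.pow 2))

lemma memL2_Ioc {f : ℝ → ℝ} (hf : Continuous f) (a b : ℝ) :
    MemLp f 2 (volume.restrict (Ioc a b)) := by
  refine (memLp_two_iff_integrable_sq (hf.aestronglyMeasurable.restrict)).2 ?_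
  exact ((hf.pow 2).continuousOn.integrableOn_compact isCompact_Icc).mono_set Ioc_subset_Icc_self

lemma ii_eq {f : ℝ → ℝ} {a b : ℝ} (hab : a ≤ b) :
    ∫ t in a..b, f t = ∫ t in Ioo a b, f t := by
  rw [intervalIntegral.integral_of_le hab, integral_Ioc_eq_integral_Ioo]

lemma fub {L h : ℝ} (hL : 0 < L) (hh : 0 < h) {f : ℝ × ℝ → ℝ} (hf : Continuous f) :
    ∫ p in dom L h, f p = ∫ x in (0:ℝ)..L, ∫ z in (-h)..(0:ℝ), f (x, z) := by
  have hint : IntegrableOn f (Ioo 0 L ×ˢ Ioo (-h) 0) ((volume : Measure ℝ).prod volume) := by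
    rw [← Measure.volume_eq_prod]; exact integrableOn_dom hf
  have H := setIntegral_prod f hint
  rw [← Measure.volume_eq_prod] at H
  have e : ∀ x : ℝ, ∫ z in Ioo (-h) 0, f (x, z) = ∫ z in (-h)..(0:ℝ), f (x, z) := fun x =>
    (ii_eq (by linarith)).symm
  rw [show dom L h = Ioo 0 L ×ˢ Ioo (-h) 0 from rfl, H]
  simp_rw [e]
  exact (ii_eq hL.le).symm

lemma swap_iterated {a b c d : ℝ} (hab : a ≤ b) (hcd : c ≤ d) {H : ℝ × ℝ → ℝ}
    (hH : Continuous H) :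
    ∫ z in c..d, ∫ t in a..b, H (t, z) = ∫ t in a..b, ∫ z in c..d, H (t, z) := by
  have hi : Integrable (Function.uncurry fun z t => H (t, z))
      ((volume.restrict (Ioo c d)).prod (volume.restrict (Ioo a b))) := by
    rw [Measure.prod_restrict, ← Measure.volume_eq_prod]
    exact integrableOn_prodIoo (hH.comp continuous_swap)
  have S := integral_integral_swap hi
  have e1 : ∀ z : ℝ, ∫ t in Ioo a b, H (t, z) = ∫ t in a..b, H (t, z) := fun z =>
    (ii_eq hab).symm
  have e2 : ∀ t : ℝ, ∫ z in Ioo c d, H (t, z) = ∫ z in c..d, H (t, z) := fun t =>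
    (ii_eq hcd).symm
  simp_rw [e1, e2] at S
  rw [ii_eq hcd, ii_eq hab]
  exact S

lemma l2_nonneg (L h : ℝ) (f : ℝ × ℝ → ℝ) : 0 ≤ l2 L h f := Real.sqrt_nonneg _

lemma h1n_nonneg (L h : ℝ) (f : ℝ × ℝ → ℝ) : 0 ≤ h1n L h f := Real.sqrt_nonneg _

lemma h2n_nonneg (L h : ℝ) (f : ℝ × ℝ → ℝ) : 0 ≤ h2n L h f := Real.sqrt_nonneg _

lemma sq_l2 (L h : ℝ) (f : ℝ × ℝ → ℝ) : l2 L h f ^ 2 = ∫ p in dom L h, f p ^ 2 :=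
  Real.sq_sqrt (integral_nonneg fun _ => sq_nonneg _)

lemma cs_dom (L h : ℝ) {f g : ℝ × ℝ → ℝ} (hf : Continuous f) (hg : Continuous g) :
    ∫ p in dom L h, |f p| * |g p| ≤ l2 L h f * l2 L h g :=
  cs_abs (memL2_dom hf) (memL2_dom hg)

lemma l2_le_h1n (L h : ℝ) (f : ℝ × ℝ → ℝ) : l2 L h f ≤ h1n L h f := by
  have : l2 L h f ^ 2 ≤ l2 L h f ^ 2 + l2 L h (pdx f) ^ 2 + l2 L h (pdz f) ^ 2 := by
    linarith [sq_nonneg (l2 L h (pdx f)), sq_nonneg (l2 L h (pdz f))]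
  have := Real.sqrt_le_sqrt this
  rwa [Real.sqrt_sq (l2_nonneg L h f)] at this

lemma l2_pdx_le_h1n (L h : ℝ) (f : ℝ × ℝ → ℝ) : l2 L h (pdx f) ≤ h1n L h f := by
  have : l2 L h (pdx f) ^ 2 ≤ l2 L h f ^ 2 + l2 L h (pdx f) ^ 2 + l2 L h (pdz f) ^ 2 := by
    linarith [sq_nonneg (l2 L h f), sq_nonneg (l2 L h (pdz f))]
  have := Real.sqrt_le_sqrt this
  rwa [Real.sqrt_sq (l2_nonneg L h (pdx f))] at this

lemma l2_pdz_le_h1n (L h : ℝ) (f : ℝ × ℝ → ℝ) : l2 L h (pdz f) ≤ h1n L h f := by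
  have : l2 L h (pdz f) ^ 2 ≤ l2 L h f ^ 2 + l2 L h (pdx f) ^ 2 + l2 L h (pdz f) ^ 2 := by
    linarith [sq_nonneg (l2 L h f), sq_nonneg (l2 L h (pdx f))]
  have := Real.sqrt_le_sqrt this
  rwa [Real.sqrt_sq (l2_nonneg L h (pdz f))] at this

lemma h1n_le_h2n (L h : ℝ) (f : ℝ × ℝ → ℝ) : h1n L h f ≤ h2n L h f := by
  have : h1n L h f ^ 2 ≤ h1n L h f ^ 2 + l2 L h (pdx (pdx f)) ^ 2 + l2 L h (pdx (pdz f)) ^ 2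
      + l2 L h (pdz (pdz f)) ^ 2 := by
    linarith [sq_nonneg (l2 L h (pdx (pdx f))), sq_nonneg (l2 L h (pdx (pdz f))),
      sq_nonneg (l2 L h (pdz (pdz f)))]
  have := Real.sqrt_le_sqrt this
  rwa [Real.sqrt_sq (h1n_nonneg L h f)] at this

lemma l2_pdxx_le_h2n (L h : ℝ) (f : ℝ × ℝ → ℝ) : l2 L h (pdx (pdx f)) ≤ h2n L h f := by
  have : l2 L h (pdx (pdx f)) ^ 2 ≤ h1n L h f ^ 2 + l2 L h (pdx (pdx f)) ^ 2
      + l2 L h (pdx (pdz f)) ^ 2 + l2 L h (pdz (pdz f)) ^ 2 := by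
    linarith [sq_nonneg (h1n L h f), sq_nonneg (l2 L h (pdx (pdz f))),
      sq_nonneg (l2 L h (pdz (pdz f)))]
  have := Real.sqrt_le_sqrt this
  rwa [Real.sqrt_sq (l2_nonneg L h (pdx (pdx f)))] at this

lemma l2_pdxz_le_h2n (L h : ℝ) (f : ℝ × ℝ → ℝ) : l2 L h (pdx (pdz f)) ≤ h2n L h f := by
  have : l2 L h (pdx (pdz f)) ^ 2 ≤ h1n L h f ^ 2 + l2 L h (pdx (pdx f)) ^ 2
      + l2 L h (pdx (pdz f)) ^ 2 + l2 L h (pdz (pdz f)) ^ 2 := by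
    linarith [sq_nonneg (h1n L h f), sq_nonneg (l2 L h (pdx (pdx f))),
      sq_nonneg (l2 L h (pdz (pdz f)))]
  have := Real.sqrt_le_sqrt this
  rwa [Real.sqrt_sq (l2_nonneg L h (pdx (pdz f)))] at this

lemma agmon1d {f f' : ℝ → ℝ} {a b z : ℝ} (hd : ∀ s, HasDerivAt f (f' s) s)
    (hc : Continuous f) (hc' : Continuous f') (ha : f a = 0) (hz : z ∈ Icc a b) :
    f z ^ 2 ≤ ∫ s in a..b, 2 * |f s| * |f' s| := by
  have hq : Continuous fun s => 2 * f s * f' s := by continuity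
  have hqa : Continuous fun s => 2 * |f s| * |f' s| :=
    (continuous_const.mul hc.abs).mul hc'.abs
  have hsq : ∀ s ∈ uIcc a z, HasDerivAt (fun s => f s ^ 2) (2 * f s * f' s) s := fun s _ => by
    have := (hd s).pow 2
    norm_num at this
    exact this
  have key : ∫ s in a..z, 2 * f s * f' s = f z ^ 2 - f a ^ 2 :=
    integral_eq_sub_of_hasDerivAt hsq (hq.intervalIntegrable _ _)
  have h1 : f z ^ 2 = ∫ s in a..z, 2 * f s * f' s := by rw [key, ha]; ring
  rw [h1]
  have step1 : ∫ s in a..z, 2 * f s * f' s ≤ ∫ s in a..z, 2 * |f s| * |f' s| := by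
    refine intervalIntegral.integral_mono_on hz.1 (hq.intervalIntegrable _ _)
      (hqa.intervalIntegrable _ _) fun s _ => ?_
    have h2 : f s * f' s ≤ |f s| * |f' s| := (le_abs_self _).trans (le_of_eq (abs_mul _ _))
    nlinarith
  refine step1.trans (intervalIntegral.integral_mono_interval le_rfl hz.1 hz.2
    (Filter.Eventually.of_forall fun s => by positivity) (hqa.intervalIntegrable _ _))

lemma w_bound {u : ℝ × ℝ → ℝ} (hux : Continuous (pdx u)) {h x z : ℝ} (hh : 0 < h)
    (hz : z ∈ Icc (-h) 0) :
    wOp u (x, z) ^ 2 ≤ h * ∫ s in (-h)..(0:ℝ), pdx u (x, s) ^ 2 := by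
  set f : ℝ → ℝ := fun s => pdx u (x, s) with hfdef
  have hfc : Continuous f := hux.comp (continuous_const.prodMk continuous_id)
  have h1 : |wOp u (x, z)| ≤ ∫ s in (-h)..(0:ℝ), |f s| := by
    have e1 : wOp u (x, z) = ∫ s in z..(0:ℝ), f s := rfl
    rw [e1]
    calc |∫ s in z..(0:ℝ), f s| ≤ ∫ s in z..(0:ℝ), |f s| := by
          simpa [Real.norm_eq_abs] using
            intervalIntegral.norm_integral_le_integral_norm (μ := volume) (f := f) hz.2
      _ ≤ ∫ s in (-h)..(0:ℝ), |f s| :=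
          intervalIntegral.integral_mono_interval hz.1 hz.2 le_rfl
            (Filter.Eventually.of_forall fun s => abs_nonneg _)
            (hfc.abs.intervalIntegrable _ _)
  have h2 : (∫ s in (-h)..(0:ℝ), |f s|) ^ 2 ≤ h * ∫ s in (-h)..(0:ℝ), f s ^ 2 := by
    have hM : MemLp f 2 (volume.restrict (Ioc (-h) 0)) := memL2_Ioc hfc _ _
    have hone : MemLp (fun _ : ℝ => (1:ℝ)) 2 (volume.restrict (Ioc (-h) 0)) :=
      memL2_Ioc continuous_const _ _
    have H := cs_abs hM hone
    simp only [abs_one, mul_one, one_pow] at H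
    have e2 : ∫ _s in Ioc (-h) (0:ℝ), (1:ℝ) = h := by
      simp [Real.volume_Ioc]
      linarith
    rw [e2] at H
    have hnn : (0:ℝ) ≤ ∫ s in Ioc (-h) (0:ℝ), |f s| := integral_nonneg fun s => abs_nonneg _
    have hsq : (∫ s in Ioc (-h) (0:ℝ), |f s|) ^ 2 ≤
        (Real.sqrt (∫ s in Ioc (-h) (0:ℝ), f s ^ 2) * Real.sqrt h) ^ 2 := by
      apply pow_le_pow_left₀ hnn H
    rw [mul_pow, Real.sq_sqrt (integral_nonneg fun s => sq_nonneg _), Real.sq_sqrt hh.le]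
      at hsq
    rw [intervalIntegral.integral_of_le (by linarith : -h ≤ (0:ℝ)),
        intervalIntegral.integral_of_le (by linarith : -h ≤ (0:ℝ))]
    linarith
  calc wOp u (x, z) ^ 2 = |wOp u (x, z)| ^ 2 := (sq_abs _).symm
    _ ≤ (∫ s in (-h)..(0:ℝ), |f s|) ^ 2 := pow_le_pow_left₀ (abs_nonneg _) h1 2
    _ ≤ h * ∫ s in (-h)..(0:ℝ), f s ^ 2 := h2

lemma sup_slice {L h : ℝ} (hL : 0 < L) (hh : 0 < h) {F Fx : ℝ × ℝ → ℝ}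
    (hF : Continuous F) (hFx : Continuous Fx)
    (hd : ∀ z t : ℝ, HasDerivAt (fun t => F (t, z)) (Fx (t, z)) t)
    {x : ℝ} (hx : x ∈ Icc (0:ℝ) L) :
    ∫ z in (-h)..(0:ℝ), F (x, z) ^ 2 ≤
      (1 / L) * (∫ p in dom L h, F p ^ 2) + ∫ p in dom L h, 2 * |F p| * |Fx p| := by
  have hhle : (-h : ℝ) ≤ 0 := by linarith
  have hHc : Continuous fun p : ℝ × ℝ => 2 * |F p| * |Fx p| :=
    (continuous_const.mul hF.abs).mul hFx.abs
  have hgc : Continuous fun t : ℝ => ∫ z in (-h)..(0:ℝ), F (t, z) ^ 2 := by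
    have huc : Continuous (Function.uncurry fun (t z : ℝ) => F (t, z) ^ 2) := by
      have e : (Function.uncurry fun (t z : ℝ) => F (t, z) ^ 2) = fun p : ℝ × ℝ => F p ^ 2 := rfl
      rw [e]; exact hF.pow 2
    exact intervalIntegral.continuous_parametric_intervalIntegral_of_continuous'
      (μ := volume) huc (-h) 0
  have hD2c : Continuous fun z : ℝ => ∫ t in (0:ℝ)..L, 2 * |F (t, z)| * |Fx (t, z)| := by
    have huc : Continuous (Function.uncurry fun (z t : ℝ) => 2 * |F (t, z)| * |Fx (t, z)|) := by
      have e : (Function.uncurry fun (z t : ℝ) => 2 * |F (t, z)| * |Fx (t, z)|)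
          = (fun p : ℝ × ℝ => 2 * |F p| * |Fx p|) ∘ Prod.swap := rfl
      rw [e]; exact hHc.comp continuous_swap
    exact intervalIntegral.continuous_parametric_intervalIntegral_of_continuous'
      (μ := volume) huc 0 L
  have ftc : ∀ (z a b : ℝ),
      ∫ t in a..b, 2 * F (t, z) * Fx (t, z) = F (b, z) ^ 2 - F (a, z) ^ 2 := by
    intro z a b
    refine integral_eq_sub_of_hasDerivAt (f := fun t => F (t, z) ^ 2)
      (f' := fun t => 2 * F (t, z) * Fx (t, z)) (fun t _ => ?_) ?_
    · have := (hd z t).pow 2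
      norm_num at this
      exact this
    · exact ((continuous_const.mul (hF.comp (continuous_id.prodMk continuous_const))).mul
        (hFx.comp (continuous_id.prodMk continuous_const))).intervalIntegrable _ _
  have pt : ∀ x' ∈ Icc (0:ℝ) L, ∀ z : ℝ, F (x, z) ^ 2 - F (x', z) ^ 2 ≤
      ∫ t in (0:ℝ)..L, 2 * |F (t, z)| * |Fx (t, z)| := by
    intro x' hx' z
    have habs : ∀ t : ℝ, |2 * F (t, z) * Fx (t, z)| = 2 * |F (t, z)| * |Fx (t, z)| := fun t => by
      rw [abs_mul, abs_mul, abs_two]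
    have hqc : Continuous fun t => 2 * F (t, z) * Fx (t, z) :=
      (continuous_const.mul (hF.comp (continuous_id.prodMk continuous_const))).mul
        (hFx.comp (continuous_id.prodMk continuous_const))
    have hqac : Continuous fun t => 2 * |F (t, z)| * |Fx (t, z)| :=
      (continuous_const.mul (hF.comp (continuous_id.prodMk continuous_const)).abs).mul
        (hFx.comp (continuous_id.prodMk continuous_const)).abs
    rw [← ftc z x' x]
    rcases le_total x' x with hle | hle
    · calc ∫ t in x'..x, 2 * F (t, z) * Fx (t, z)
          ≤ ∫ t in x'..x, 2 * |F (t, z)| * |Fx (t, z)| := by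
            refine intervalIntegral.integral_mono_on hle (hqc.intervalIntegrable _ _)
              (hqac.intervalIntegrable _ _) fun t _ => ?_
            calc 2 * F (t, z) * Fx (t, z) ≤ |2 * F (t, z) * Fx (t, z)| := le_abs_self _
              _ = _ := habs t
        _ ≤ _ := intervalIntegral.integral_mono_interval hx'.1 hle hx.2
            (Filter.Eventually.of_forall fun t => by positivity) (hqac.intervalIntegrable _ _)
    · rw [intervalIntegral.integral_symm x x']
      calc -(∫ t in x..x', 2 * F (t, z) * Fx (t, z))
          ≤ |∫ t in x..x', 2 * F (t, z) * Fx (t, z)| := neg_le_abs _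
        _ ≤ ∫ t in x..x', 2 * |F (t, z)| * |Fx (t, z)| := by
            simpa [Real.norm_eq_abs, abs_mul] using intervalIntegral.norm_integral_le_integral_norm
              (μ := volume) (f := fun t => 2 * F (t, z) * Fx (t, z)) hle
        _ ≤ _ := intervalIntegral.integral_mono_interval hx.1 hle hx'.2
            (Filter.Eventually.of_forall fun t => by positivity) (hqac.intervalIntegrable _ _)
  have key : ∀ x' ∈ Icc (0:ℝ) L, (∫ z in (-h)..(0:ℝ), F (x, z) ^ 2) ≤
      (∫ z in (-h)..(0:ℝ), F (x', z) ^ 2) +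
        ∫ z in (-h)..(0:ℝ), ∫ t in (0:ℝ)..L, 2 * |F (t, z)| * |Fx (t, z)| := by
    intro x' hx'
    have hi1 : IntervalIntegrable (fun z => F (x, z) ^ 2) volume (-h) 0 :=
      (((hF.comp (continuous_const.prodMk continuous_id)).pow 2)).intervalIntegrable _ _
    have hi2 : IntervalIntegrable (fun z => F (x', z) ^ 2) volume (-h) 0 :=
      (((hF.comp (continuous_const.prodMk continuous_id)).pow 2)).intervalIntegrable _ _
    have hsub : (∫ z in (-h)..(0:ℝ), F (x, z) ^ 2) - ∫ z in (-h)..(0:ℝ), F (x', z) ^ 2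
        = ∫ z in (-h)..(0:ℝ), (F (x, z) ^ 2 - F (x', z) ^ 2) :=
      (intervalIntegral.integral_sub hi1 hi2).symm
    have hmono : (∫ z in (-h)..(0:ℝ), (F (x, z) ^ 2 - F (x', z) ^ 2)) ≤
        ∫ z in (-h)..(0:ℝ), ∫ t in (0:ℝ)..L, 2 * |F (t, z)| * |Fx (t, z)| :=
      intervalIntegral.integral_mono_on hhle (hi1.sub hi2) (hD2c.intervalIntegrable _ _)
        fun z _ => pt x' hx' z
    linarith
  have step : L * ((∫ z in (-h)..(0:ℝ), F (x, z) ^ 2) -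
      ∫ z in (-h)..(0:ℝ), ∫ t in (0:ℝ)..L, 2 * |F (t, z)| * |Fx (t, z)|) ≤
      ∫ x' in (0:ℝ)..L, ∫ z in (-h)..(0:ℝ), F (x', z) ^ 2 := by
    have h1 := intervalIntegral.integral_mono_on (μ := volume) hL.le
      (_root_.intervalIntegrable_const
        (c := (∫ z in (-h)..(0:ℝ), F (x, z) ^ 2) -
          ∫ z in (-h)..(0:ℝ), ∫ t in (0:ℝ)..L, 2 * |F (t, z)| * |Fx (t, z)|))
      (hgc.intervalIntegrable _ _) (fun x' hx' => by linarith [key x' hx'])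
    rw [intervalIntegral.integral_const] at h1
    simp only [smul_eq_mul, sub_zero] at h1
    linarith
  have id1 : ∫ x' in (0:ℝ)..L, ∫ z in (-h)..(0:ℝ), F (x', z) ^ 2
      = ∫ p in dom L h, F p ^ 2 := (fub hL hh (hF.pow 2)).symm
  have id2 : (∫ z in (-h)..(0:ℝ), ∫ t in (0:ℝ)..L, 2 * |F (t, z)| * |Fx (t, z)|)
      = ∫ p in dom L h, 2 * |F p| * |Fx p| := by
    rw [swap_iterated hL.le hhle hHc, fub hL hh hHc]
  rw [id1, id2] at step
  have h2 : (∫ z in (-h)..(0:ℝ), F (x, z) ^ 2) - (∫ p in dom L h, 2 * |F p| * |Fx p|)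
      ≤ (∫ p in dom L h, F p ^ 2) / L := (le_div_iff₀ hL).2 (by linarith)
  have h3 : (1 / L) * (∫ p in dom L h, F p ^ 2) = (∫ p in dom L h, F p ^ 2) / L := by ring
  linarith

theorem stmt10 (L h : ℝ) (hL : 0 < L) (hh : 0 < h) :
    ∃ c > 0, ∀ u φ ψ : ℝ × ℝ → ℝ,
      ContDiff ℝ 1 u → ContDiff ℝ 2 φ → Continuous ψ →
      (∀ z ∈ Icc (-h) (0:ℝ), u (0, z) = 0 ∧ u (L, z) = 0) →
      (∀ x ∈ Icc (0:ℝ) L, u (x, -h) = 0) →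
      (∀ x ∈ Icc (0:ℝ) L, (∫ z in (-h)..(0:ℝ), u (x, z)) = 0) →
      (∀ z ∈ Icc (-h) (0:ℝ), φ (0, z) = 0 ∧ φ (L, z) = 0) →
      (∀ x ∈ Icc (0:ℝ) L, φ (x, -h) = 0) →
      |∫ p in dom L h, (u p * pdx φ p + wOp u p * pdz φ p) * ψ p| ≤
        c * h1n L h u * h1n L h φ ^ ((1:ℝ)/2) * h2n L h φ ^ ((1:ℝ)/2) * l2 L h ψ := by
  refine ⟨Real.sqrt ((2 * h + 4) * (1 / L + 2)), Real.sqrt_pos.2 (by positivity), ?_⟩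
  intro u φ ψ hu hφ hψ _hul hub _hmean _hφl _hφb
  have hhle : (-h : ℝ) ≤ 0 := by linarith
  -- continuity and differentiability facts
  have huc : Continuous u := hu.continuous
  have hud : Differentiable ℝ u := hu.differentiable one_ne_zero
  have hux : Continuous (pdx u) := (contDiff_pdx (m := 0) hu (by norm_num)).continuous
  have huz : Continuous (pdz u) := (contDiff_pdz (m := 0) hu (by norm_num)).continuous
  have hφx1 : ContDiff ℝ 1 (pdx φ) := contDiff_pdx hφ (by norm_num)
  have hφz1 : ContDiff ℝ 1 (pdz φ) := contDiff_pdz hφ (by norm_num)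
  have hφx : Continuous (pdx φ) := hφx1.continuous
  have hφz : Continuous (pdz φ) := hφz1.continuous
  have hφxx : Continuous (pdx (pdx φ)) := (contDiff_pdx (m := 0) hφx1 (by norm_num)).continuous
  have hφxz : Continuous (pdx (pdz φ)) := (contDiff_pdx (m := 0) hφz1 (by norm_num)).continuous
  have hwc : Continuous (wOp u) := by
    have huc2 : Continuous (Function.uncurry fun (x t : ℝ) => pdx u (x, t)) := hux
    have e : wOp u = fun p : ℝ × ℝ => -∫ t in (0:ℝ)..p.2, pdx u (p.1, t) := by
      funext p
      rw [wOp, intervalIntegral.integral_symm]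
    rw [e]
    exact (continuous_parametric_primitive_of_continuous (μ := volume) (a₀ := 0) huc2).neg
  -- shorthand
  set Pu := h1n L h u with hPu
  set A := h1n L h φ with hA
  set B := h2n L h φ with hB
  have hPunn : 0 ≤ Pu := h1n_nonneg L h u
  have hAnn : 0 ≤ A := h1n_nonneg L h φ
  have hBnn : 0 ≤ B := h2n_nonneg L h φ
  have hCnn : (0:ℝ) ≤ (1 / L + 2) * (A * B) := by positivity
  -- the sup-in-x bounds for slices of ∂ₓφ and ∂_zφ
  have hsupx : ∀ x ∈ Icc (0:ℝ) L,
      (∫ z in (-h)..(0:ℝ), pdx φ (x, z) ^ 2) ≤ (1 / L + 2) * (A * B) := by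
    intro x hx
    have hd : ∀ z t : ℝ, HasDerivAt (fun t => pdx φ (t, z)) (pdx (pdx φ) (t, z)) t := fun z t =>
      hasDerivAt_slice_x (hφx1.differentiable one_ne_zero) z t
    have H := sup_slice hL hh hφx hφxx hd hx
    have e1 : ∫ p in dom L h, pdx φ p ^ 2 = l2 L h (pdx φ) ^ 2 := (sq_l2 L h (pdx φ)).symm
    have e2 : ∫ p in dom L h, 2 * |pdx φ p| * |pdx (pdx φ) p| ≤
        2 * (l2 L h (pdx φ) * l2 L h (pdx (pdx φ))) := by
      have e : ∀ p : ℝ × ℝ, 2 * |pdx φ p| * |pdx (pdx φ) p|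
          = 2 * (|pdx φ p| * |pdx (pdx φ) p|) := fun p => by ring
      simp_rw [e]
      rw [MeasureTheory.integral_const_mul]
      exact mul_le_mul_of_nonneg_left (cs_dom L h hφx hφxx) (by norm_num)
    have hb1 : l2 L h (pdx φ) ^ 2 ≤ A * B := by
      rw [sq]
      exact mul_le_mul (l2_pdx_le_h1n L h φ)
        ((l2_pdx_le_h1n L h φ).trans (h1n_le_h2n L h φ)) (l2_nonneg _ _ _) hAnn
    have hb2 : l2 L h (pdx φ) * l2 L h (pdx (pdx φ)) ≤ A * B :=
      mul_le_mul (l2_pdx_le_h1n L h φ) (l2_pdxx_le_h2n L h φ) (l2_nonneg _ _ _) hAnn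
    have h1L : (0:ℝ) < 1 / L := by positivity
    have hm : (1 / L) * (∫ p in dom L h, pdx φ p ^ 2) ≤ (1 / L) * (A * B) := by
      rw [e1]
      exact mul_le_mul_of_nonneg_left hb1 h1L.le
    nlinarith [H, e2, hb2]
  have hsupz : ∀ x ∈ Icc (0:ℝ) L,
      (∫ z in (-h)..(0:ℝ), pdz φ (x, z) ^ 2) ≤ (1 / L + 2) * (A * B) := by
    intro x hx
    have hd : ∀ z t : ℝ, HasDerivAt (fun t => pdz φ (t, z)) (pdx (pdz φ) (t, z)) t := fun z t =>
      hasDerivAt_slice_x (hφz1.differentiable one_ne_zero) z t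
    have H := sup_slice hL hh hφz hφxz hd hx
    have e1 : ∫ p in dom L h, pdz φ p ^ 2 = l2 L h (pdz φ) ^ 2 := (sq_l2 L h (pdz φ)).symm
    have e2 : ∫ p in dom L h, 2 * |pdz φ p| * |pdx (pdz φ) p| ≤
        2 * (l2 L h (pdz φ) * l2 L h (pdx (pdz φ))) := by
      have e : ∀ p : ℝ × ℝ, 2 * |pdz φ p| * |pdx (pdz φ) p|
          = 2 * (|pdz φ p| * |pdx (pdz φ) p|) := fun p => by ring
      simp_rw [e]
      rw [MeasureTheory.integral_const_mul]
      exact mul_le_mul_of_nonneg_left (cs_dom L h hφz hφxz) (by norm_num)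
    have hb1 : l2 L h (pdz φ) ^ 2 ≤ A * B := by
      rw [sq]
      exact mul_le_mul (l2_pdz_le_h1n L h φ)
        ((l2_pdz_le_h1n L h φ).trans (h1n_le_h2n L h φ)) (l2_nonneg _ _ _) hAnn
    have hb2 : l2 L h (pdz φ) * l2 L h (pdx (pdz φ)) ≤ A * B :=
      mul_le_mul (l2_pdz_le_h1n L h φ) (l2_pdxz_le_h2n L h φ) (l2_nonneg _ _ _) hAnn
    have h1L : (0:ℝ) < 1 / L := by positivity
    have hm : (1 / L) * (∫ p in dom L h, pdz φ p ^ 2) ≤ (1 / L) * (A * B) := by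
      rw [e1]
      exact mul_le_mul_of_nonneg_left hb1 h1L.le
    nlinarith [H, e2, hb2]
  -- slice continuity helpers
  have hsl : ∀ x : ℝ, Continuous fun s : ℝ => (x, s) := fun x =>
    continuous_const.prodMk continuous_id
  -- Agmon in z for u
  have hagz : ∀ x ∈ Icc (0:ℝ) L, ∀ z ∈ Icc (-h) (0:ℝ),
      u (x, z) ^ 2 ≤ ∫ s in (-h)..(0:ℝ), 2 * |u (x, s)| * |pdz u (x, s)| := by
    intro x hx z hz
    exact agmon1d (f := fun s => u (x, s)) (f' := fun s => pdz u (x, s))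
      (fun s => hasDerivAt_slice_z hud x s) (huc.comp (hsl x)) (huz.comp (hsl x))
      (hub x hx) hz
  have hS2c : Continuous fun x : ℝ => ∫ s in (-h)..(0:ℝ), 2 * |u (x, s)| * |pdz u (x, s)| := by
    have huc2 : Continuous (Function.uncurry fun (x s : ℝ) => 2 * |u (x, s)| * |pdz u (x, s)|) :=
      (continuous_const.mul huc.abs).mul huz.abs
    exact intervalIntegral.continuous_parametric_intervalIntegral_of_continuous'
      (μ := volume) huc2 (-h) 0
  have hS2nn : ∀ x : ℝ, 0 ≤ ∫ s in (-h)..(0:ℝ), 2 * |u (x, s)| * |pdz u (x, s)| := fun x =>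
    intervalIntegral.integral_nonneg hhle fun s _ => by positivity
  have hU2c : Continuous fun x : ℝ => ∫ s in (-h)..(0:ℝ), pdx u (x, s) ^ 2 := by
    have huc2 : Continuous (Function.uncurry fun (x s : ℝ) => pdx u (x, s) ^ 2) := hux.pow 2
    exact intervalIntegral.continuous_parametric_intervalIntegral_of_continuous'
      (μ := volume) huc2 (-h) 0
  have hU2nn : ∀ x : ℝ, 0 ≤ ∫ s in (-h)..(0:ℝ), pdx u (x, s) ^ 2 := fun x =>
    intervalIntegral.integral_nonneg hhle fun s _ => sq_nonneg _
  -- Term 1 : ∫ (u ∂ₓφ)² ≤ 2 Pu² C where C = (1/L+2) A B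
  have hcont1 : Continuous fun p : ℝ × ℝ => (u p * pdx φ p) ^ 2 := (huc.mul hφx).pow 2
  have T1 : (∫ p in dom L h, (u p * pdx φ p) ^ 2) ≤
      2 * (Pu * Pu) * ((1 / L + 2) * (A * B)) := by
    rw [fub hL hh hcont1]
    have inner1 : ∀ x ∈ Icc (0:ℝ) L,
        (∫ z in (-h)..(0:ℝ), (u (x, z) * pdx φ (x, z)) ^ 2) ≤
          (∫ s in (-h)..(0:ℝ), 2 * |u (x, s)| * |pdz u (x, s)|) * ((1 / L + 2) * (A * B)) := by
      intro x hx
      have hi1 : IntervalIntegrable (fun z => (u (x, z) * pdx φ (x, z)) ^ 2) volume (-h) 0 :=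
        (((huc.comp (hsl x)).mul (hφx.comp (hsl x))).pow 2).intervalIntegrable _ _
      have hi2 : IntervalIntegrable
          (fun z => (∫ s in (-h)..(0:ℝ), 2 * |u (x, s)| * |pdz u (x, s)|) * pdx φ (x, z) ^ 2)
          volume (-h) 0 :=
        (continuous_const.mul ((hφx.comp (hsl x)).pow 2)).intervalIntegrable _ _
      calc ∫ z in (-h)..(0:ℝ), (u (x, z) * pdx φ (x, z)) ^ 2
          ≤ ∫ z in (-h)..(0:ℝ),
              (∫ s in (-h)..(0:ℝ), 2 * |u (x, s)| * |pdz u (x, s)|) * pdx φ (x, z) ^ 2 := by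
            refine intervalIntegral.integral_mono_on hhle hi1 hi2 fun z hz => ?_
            have h1 := hagz x hx z hz
            have e : (u (x, z) * pdx φ (x, z)) ^ 2 = u (x, z) ^ 2 * pdx φ (x, z) ^ 2 := by ring
            rw [e]
            exact mul_le_mul_of_nonneg_right h1 (sq_nonneg _)
        _ = (∫ s in (-h)..(0:ℝ), 2 * |u (x, s)| * |pdz u (x, s)|) *
              ∫ z in (-h)..(0:ℝ), pdx φ (x, z) ^ 2 := intervalIntegral.integral_const_mul _ _
        _ ≤ _ := mul_le_mul_of_nonneg_left (hsupx x hx) (hS2nn x)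
    have houter : (∫ x in (0:ℝ)..L, ∫ z in (-h)..(0:ℝ), (u (x, z) * pdx φ (x, z)) ^ 2) ≤
        ∫ x in (0:ℝ)..L,
          (∫ s in (-h)..(0:ℝ), 2 * |u (x, s)| * |pdz u (x, s)|) * ((1 / L + 2) * (A * B)) := by
      have hcI : Continuous fun x : ℝ => ∫ z in (-h)..(0:ℝ), (u (x, z) * pdx φ (x, z)) ^ 2 := by
        have huc2 : Continuous (Function.uncurry fun (x z : ℝ) => (u (x, z) * pdx φ (x, z)) ^ 2) :=
          hcont1
        exact intervalIntegral.continuous_parametric_intervalIntegral_of_continuous'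
          (μ := volume) huc2 (-h) 0
      exact intervalIntegral.integral_mono_on hL.le (hcI.intervalIntegrable _ _)
        ((hS2c.mul continuous_const).intervalIntegrable _ _) inner1
    have hfact : (∫ x in (0:ℝ)..L,
        (∫ s in (-h)..(0:ℝ), 2 * |u (x, s)| * |pdz u (x, s)|) * ((1 / L + 2) * (A * B)))
        = (∫ x in (0:ℝ)..L, ∫ s in (-h)..(0:ℝ), 2 * |u (x, s)| * |pdz u (x, s)|) *
            ((1 / L + 2) * (A * B)) := intervalIntegral.integral_mul_const _ _
    have hS2tot : (∫ x in (0:ℝ)..L, ∫ s in (-h)..(0:ℝ), 2 * |u (x, s)| * |pdz u (x, s)|) ≤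
        2 * (Pu * Pu) := by
      have hcH : Continuous fun p : ℝ × ℝ => 2 * |u p| * |pdz u p| :=
        (continuous_const.mul huc.abs).mul huz.abs
      rw [← fub hL hh hcH]
      have e : ∀ p : ℝ × ℝ, 2 * |u p| * |pdz u p| = 2 * (|u p| * |pdz u p|) := fun p => by ring
      simp_rw [e]
      rw [MeasureTheory.integral_const_mul]
      have := cs_dom L h huc huz
      have hb : l2 L h u * l2 L h (pdz u) ≤ Pu * Pu :=
        mul_le_mul (l2_le_h1n L h u) (l2_pdz_le_h1n L h u) (l2_nonneg _ _ _) hPunn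
      linarith
    calc (∫ x in (0:ℝ)..L, ∫ z in (-h)..(0:ℝ), (u (x, z) * pdx φ (x, z)) ^ 2)
        ≤ (∫ x in (0:ℝ)..L, ∫ s in (-h)..(0:ℝ), 2 * |u (x, s)| * |pdz u (x, s)|) *
            ((1 / L + 2) * (A * B)) := by rw [← hfact]; exact houter
      _ ≤ 2 * (Pu * Pu) * ((1 / L + 2) * (A * B)) :=
          mul_le_mul_of_nonneg_right hS2tot hCnn
  -- Term 2 : ∫ (w ∂_zφ)² ≤ h Pu² C
  have hcont2 : Continuous fun p : ℝ × ℝ => (wOp u p * pdz φ p) ^ 2 := (hwc.mul hφz).pow 2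
  have T2 : (∫ p in dom L h, (wOp u p * pdz φ p) ^ 2) ≤
      (Pu * Pu) * (h * ((1 / L + 2) * (A * B))) := by
    rw [fub hL hh hcont2]
    have inner2 : ∀ x ∈ Icc (0:ℝ) L,
        (∫ z in (-h)..(0:ℝ), (wOp u (x, z) * pdz φ (x, z)) ^ 2) ≤
          (∫ s in (-h)..(0:ℝ), pdx u (x, s) ^ 2) * (h * ((1 / L + 2) * (A * B))) := by
      intro x hx
      have hwsl : Continuous fun z : ℝ => wOp u (x, z) := hwc.comp (hsl x)
      have hi1 : IntervalIntegrable (fun z => (wOp u (x, z) * pdz φ (x, z)) ^ 2) volume (-h) 0 :=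
        ((hwsl.mul (hφz.comp (hsl x))).pow 2).intervalIntegrable _ _
      have hi2 : IntervalIntegrable
          (fun z => (h * ∫ s in (-h)..(0:ℝ), pdx u (x, s) ^ 2) * pdz φ (x, z) ^ 2)
          volume (-h) 0 :=
        (continuous_const.mul ((hφz.comp (hsl x)).pow 2)).intervalIntegrable _ _
      calc ∫ z in (-h)..(0:ℝ), (wOp u (x, z) * pdz φ (x, z)) ^ 2
          ≤ ∫ z in (-h)..(0:ℝ),
              (h * ∫ s in (-h)..(0:ℝ), pdx u (x, s) ^ 2) * pdz φ (x, z) ^ 2 := by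
            refine intervalIntegral.integral_mono_on hhle hi1 hi2 fun z hz => ?_
            have h1 := w_bound (x := x) hux hh hz
            have e : (wOp u (x, z) * pdz φ (x, z)) ^ 2
                = wOp u (x, z) ^ 2 * pdz φ (x, z) ^ 2 := by ring
            rw [e]
            exact mul_le_mul_of_nonneg_right h1 (sq_nonneg _)
        _ = (h * ∫ s in (-h)..(0:ℝ), pdx u (x, s) ^ 2) *
              ∫ z in (-h)..(0:ℝ), pdz φ (x, z) ^ 2 := intervalIntegral.integral_const_mul _ _
        _ ≤ (h * ∫ s in (-h)..(0:ℝ), pdx u (x, s) ^ 2) * ((1 / L + 2) * (A * B)) :=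
            mul_le_mul_of_nonneg_left (hsupz x hx)
              (mul_nonneg hh.le (hU2nn x))
        _ = (∫ s in (-h)..(0:ℝ), pdx u (x, s) ^ 2) * (h * ((1 / L + 2) * (A * B))) := by ring
    have houter : (∫ x in (0:ℝ)..L, ∫ z in (-h)..(0:ℝ), (wOp u (x, z) * pdz φ (x, z)) ^ 2) ≤
        ∫ x in (0:ℝ)..L,
          (∫ s in (-h)..(0:ℝ), pdx u (x, s) ^ 2) * (h * ((1 / L + 2) * (A * B))) := by
      have hcI : Continuous fun x : ℝ =>
          ∫ z in (-h)..(0:ℝ), (wOp u (x, z) * pdz φ (x, z)) ^ 2 := by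
        have huc2 : Continuous
            (Function.uncurry fun (x z : ℝ) => (wOp u (x, z) * pdz φ (x, z)) ^ 2) := hcont2
        exact intervalIntegral.continuous_parametric_intervalIntegral_of_continuous'
          (μ := volume) huc2 (-h) 0
      exact intervalIntegral.integral_mono_on hL.le (hcI.intervalIntegrable _ _)
        ((hU2c.mul continuous_const).intervalIntegrable _ _) inner2
    have hfact : (∫ x in (0:ℝ)..L,
        (∫ s in (-h)..(0:ℝ), pdx u (x, s) ^ 2) * (h * ((1 / L + 2) * (A * B))))
        = (∫ x in (0:ℝ)..L, ∫ s in (-h)..(0:ℝ), pdx u (x, s) ^ 2) *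
            (h * ((1 / L + 2) * (A * B))) := intervalIntegral.integral_mul_const _ _
    have hU2tot : (∫ x in (0:ℝ)..L, ∫ s in (-h)..(0:ℝ), pdx u (x, s) ^ 2) ≤ Pu * Pu := by
      rw [← fub hL hh (f := fun p => pdx u p ^ 2) (hux.pow 2)]
      have e1 : ∫ p in dom L h, pdx u p ^ 2 = l2 L h (pdx u) ^ 2 := (sq_l2 L h (pdx u)).symm
      rw [e1, sq]
      exact mul_le_mul (l2_pdx_le_h1n L h u) (l2_pdx_le_h1n L h u) (l2_nonneg _ _ _) hPunn
    calc (∫ x in (0:ℝ)..L, ∫ z in (-h)..(0:ℝ), (wOp u (x, z) * pdz φ (x, z)) ^ 2)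
        ≤ (∫ x in (0:ℝ)..L, ∫ s in (-h)..(0:ℝ), pdx u (x, s) ^ 2) *
            (h * ((1 / L + 2) * (A * B))) := by rw [← hfact]; exact houter
      _ ≤ (Pu * Pu) * (h * ((1 / L + 2) * (A * B))) :=
          mul_le_mul_of_nonneg_right hU2tot
            (mul_nonneg hh.le hCnn)
  -- total integrand bound
  have hFc : Continuous fun p : ℝ × ℝ => u p * pdx φ p + wOp u p * pdz φ p :=
    (huc.mul hφx).add (hwc.mul hφz)
  have hmeas : MeasurableSet (dom L h) := measurableSet_Ioo.prod measurableSet_Ioo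
  have hsum : (∫ p in dom L h, (u p * pdx φ p + wOp u p * pdz φ p) ^ 2) ≤
      (2 * h + 4) * (1 / L + 2) * (A * B) * Pu ^ 2 := by
    have step1 : (∫ p in dom L h, (u p * pdx φ p + wOp u p * pdz φ p) ^ 2) ≤
        ∫ p in dom L h, (2 * (u p * pdx φ p) ^ 2 + 2 * (wOp u p * pdz φ p) ^ 2) := by
      refine setIntegral_mono_on (integrableOn_dom (hFc.pow 2)) ?_ hmeas fun p _ => by
        nlinarith [sq_nonneg (u p * pdx φ p - wOp u p * pdz φ p)]
      exact ((integrableOn_dom hcont1).const_mul 2).add ((integrableOn_dom hcont2).const_mul 2)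
    have step2 : (∫ p in dom L h, (2 * (u p * pdx φ p) ^ 2 + 2 * (wOp u p * pdz φ p) ^ 2))
        = 2 * (∫ p in dom L h, (u p * pdx φ p) ^ 2)
          + 2 * ∫ p in dom L h, (wOp u p * pdz φ p) ^ 2 := by
      rw [integral_add ((integrableOn_dom hcont1).const_mul 2)
        ((integrableOn_dom hcont2).const_mul 2), MeasureTheory.integral_const_mul, MeasureTheory.integral_const_mul]
    nlinarith [T1, T2, step1, step2]
  -- conclusion
  have hcs : |∫ p in dom L h, (u p * pdx φ p + wOp u p * pdz φ p) * ψ p| ≤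
      l2 L h (fun p => u p * pdx φ p + wOp u p * pdz φ p) * l2 L h ψ := by
    calc |∫ p in dom L h, (u p * pdx φ p + wOp u p * pdz φ p) * ψ p|
        ≤ ∫ p in dom L h, |u p * pdx φ p + wOp u p * pdz φ p| * |ψ p| := by
          simpa [Real.norm_eq_abs, abs_mul] using norm_integral_le_integral_norm
            (f := fun p => (u p * pdx φ p + wOp u p * pdz φ p) * ψ p)
            (μ := volume.restrict (dom L h))
      _ ≤ _ := cs_dom L h hFc hψ
  have hl2F : l2 L h (fun p => u p * pdx φ p + wOp u p * pdz φ p) ≤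
      Real.sqrt ((2 * h + 4) * (1 / L + 2)) * Pu * (Real.sqrt A * Real.sqrt B) := by
    have h1 : l2 L h (fun p => u p * pdx φ p + wOp u p * pdz φ p) =
        Real.sqrt (∫ p in dom L h, (u p * pdx φ p + wOp u p * pdz φ p) ^ 2) := rfl
    rw [h1]
    have h2 := Real.sqrt_le_sqrt hsum
    have h3 : Real.sqrt ((2 * h + 4) * (1 / L + 2) * (A * B) * Pu ^ 2)
        = Real.sqrt ((2 * h + 4) * (1 / L + 2)) * Pu * (Real.sqrt A * Real.sqrt B) := by
      rw [Real.sqrt_mul (by positivity : (0:ℝ) ≤ (2 * h + 4) * (1 / L + 2) * (A * B)),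
          Real.sqrt_mul (by positivity : (0:ℝ) ≤ (2 * h + 4) * (1 / L + 2)),
          Real.sqrt_mul hAnn, Real.sqrt_sq hPunn]
      ring
    rw [h3] at h2
    exact h2
  have hfin : l2 L h (fun p => u p * pdx φ p + wOp u p * pdz φ p) * l2 L h ψ ≤
      (Real.sqrt ((2 * h + 4) * (1 / L + 2)) * Pu * (Real.sqrt A * Real.sqrt B)) * l2 L h ψ :=
    mul_le_mul_of_nonneg_right hl2F (l2_nonneg L h ψ)
  have erw1 : A ^ ((1:ℝ)/2) = Real.sqrt A := (Real.sqrt_eq_rpow A).symm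
  have erw2 : B ^ ((1:ℝ)/2) = Real.sqrt B := (Real.sqrt_eq_rpow B).symm
  calc |∫ p in dom L h, (u p * pdx φ p + wOp u p * pdz φ p) * ψ p|
      ≤ l2 L h (fun p => u p * pdx φ p + wOp u p * pdz φ p) * l2 L h ψ := hcs
    _ ≤ (Real.sqrt ((2 * h + 4) * (1 / L + 2)) * Pu * (Real.sqrt A * Real.sqrt B)) *
          l2 L h ψ := hfin
    _ = Real.sqrt ((2 * h + 4) * (1 / L + 2)) * Pu * A ^ ((1:ℝ)/2) * B ^ ((1:ℝ)/2) *
          l2 L h ψ := by rw [erw1, erw2]; ring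
end
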